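/- Let s ≥ 2 and let I, J ∈ [n]^s be distinct-element sequences such that the pair (I, J) is free of equalities. Then there exist distinct indices i ≠ j ∈ [s] such that I_i does not appear among the entries of J and J_j does not appear among the entries of I. -/
import Mathlib


/-- If `(I, J)` is a pair of distinct-element sequences of length `s ≥ 2` that is free of
equalities, then there are distinct indices `i ≠ j` with `I_i` not among the entries of `J`
and `J_j` not among the entries of `I`. -/
theorem stmt5 {n s : ℕ} (hs : 2 ≤ s) (I J : Fin s → Fin n)
    (hI : Function.Injective I) (hJ : Function.Injective J)
    (hfree : ∀ A : Finset (Fin s), A.Nonempty → A.image I ≠ A.image J) :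
    ∃ i j : Fin s, i ≠ j ∧ (∀ a : Fin s, J a ≠ I i) ∧ (∀ a : Fin s, I a ≠ J j) := by
  have huniv : (Finset.univ : Finset (Fin s)).Nonempty := by
    exact ⟨⟨0, by omega⟩, Finset.mem_univ _⟩
  have hcard : (Finset.univ.image I).card = (Finset.univ.image J).card := by
    rw [Finset.card_image_of_injective _ hI, Finset.card_image_of_injective _ hJ]
  -- existence of some i with I i not among J
  have hS : ∃ i, ∀ a, J a ≠ I i := by
    by_contra h
    push_neg at h
    apply hfree Finset.univ huniv
    apply Finset.eq_of_subset_of_card_le _ (le_of_eq hcard.symm)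
    intro x hx
    simp only [Finset.mem_image, Finset.mem_univ, true_and] at hx ⊢
    obtain ⟨i, rfl⟩ := hx
    exact h i
  have hT : ∃ j, ∀ a, I a ≠ J j := by
    by_contra h
    push_neg at h
    apply hfree Finset.univ huniv
    refine (Finset.eq_of_subset_of_card_le ?_ (le_of_eq hcard)).symm
    intro x hx
    simp only [Finset.mem_image, Finset.mem_univ, true_and] at hx ⊢
    obtain ⟨j, rfl⟩ := hx
    exact h j
  obtain ⟨i, hi⟩ := hS
  obtain ⟨j, hj⟩ := hT
  by_cases hij : i ≠ j
  · exact ⟨i, j, hij, hi, hj⟩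
  push_neg at hij
  subst hij
  -- now i = j =: k
  by_cases h1 : ∃ i', i' ≠ i ∧ ∀ a, J a ≠ I i'
  · obtain ⟨i', hne, hi'⟩ := h1
    exact ⟨i', i, hne, hi', hj⟩
  by_cases h2 : ∃ j', j' ≠ i ∧ ∀ a, I a ≠ J j'
  · obtain ⟨j', hne, hj'⟩ := h2
    exact ⟨i, j', fun h => hne h.symm, hi, hj'⟩
  push_neg at h1 h2
  exfalso
  have hAne : (Finset.univ.erase i).Nonempty := by
    rw [← Finset.card_pos, Finset.card_erase_of_mem (Finset.mem_univ i),
      Finset.card_univ, Fintype.card_fin]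
    omega
  apply hfree _ hAne
  apply Finset.Subset.antisymm
  · intro x hx
    simp only [Finset.mem_image, Finset.mem_erase, Finset.mem_univ, and_true] at hx ⊢
    obtain ⟨a, ha, rfl⟩ := hx
    obtain ⟨b, hb⟩ := h1 a ha
    refine ⟨b, ?_, hb⟩
    rintro rfl
    exact hj a hb.symm
  · intro x hx
    simp only [Finset.mem_image, Finset.mem_erase, Finset.mem_univ, and_true] at hx ⊢
    obtain ⟨a, ha, rfl⟩ := hx
    obtain ⟨b, hb⟩ := h2 a ha
    refine ⟨b, ?_, hb⟩
    rintro rfl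
    exact hi a hb.symm
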